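/- Under the model rollout setup, let f : S × A → S be a differentiable ‘true dynamics’ map with ‖D_s f(s,a)‖ ≤ L_f and ‖D_a f(s,a)‖ ≤ L_f for all (s,a), let (s_i, a_i) be the rollout generated from the same constant initial state s₀ and the same policy π but with f in place of f̂, and suppose ε_f ≥ 0 bounds, for every i ≥ 1 and every θ, the sum ‖D_s f̂(ŝ_{i−1}(θ), â_{i−1}(θ)) − D_s f(s_{i−1}(θ), a_{i−1}(θ))‖ + ‖D_a f̂(ŝ_{i−1}(θ), â_{i−1}(θ)) − D_a f(s_{i−1}(θ), a_{i−1}(θ))‖. Then for every i ≥ 1 and θ, ‖D_θ â_i(θ) − D_θ a_i(θ)‖ ≤ L_π · ( (ε_f + 2·L_f·L_π)·K̂(i−1) + 2·L_f·L_θ ) · ∑_{j=0}^{i−1} M_f^j + 2·L_π·K̂(i) + 2·L_θ, where M_f = L_f·(1 + L_π) and K̂(i) = (1 + L_π)·L_f̂·L_θ·∑_{j=0}^{i−1} (L_f̂(1+L_π))^j + L_θ. -/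

import Mathlib

open Finset

/-- Model rollout: states `ŝ_i : Θ → S` generated from the constant initial state `s₀`
by `ŝ₀(θ) = s₀`, `ŝ_{i+1}(θ) = f(ŝ_i(θ), π(θ, ŝ_i(θ)))`. -/
def sHat {Θ S A : Type*} (π : Θ × S → A) (f : S × A → S) (s₀ : S) : ℕ → Θ → S
  | 0 => fun _ => s₀
  | (i + 1) => fun θ => f (sHat π f s₀ i θ, π (θ, sHat π f s₀ i θ))

/-- Model rollout: actions `â_i(θ) = π(θ, ŝ_i(θ))`. -/
def aHat {Θ S A : Type*} (π : Θ × S → A) (f : S × A → S) (s₀ : S) (i : ℕ) : Θ → A :=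
  fun θ => π (θ, sHat π f s₀ i θ)

/-- `K̂(i) = (1 + L_π) · L_f̂ · L_θ · ∑_{j=0}^{i−1} (L_f̂ (1 + L_π))^j + L_θ`. -/
noncomputable def Khat (Lπ Lf Lθ : ℝ) (i : ℕ) : ℝ :=
  (1 + Lπ) * Lf * Lθ * ∑ j ∈ Finset.range i, (Lf * (1 + Lπ)) ^ j + Lθ

open ContinuousLinearMap

section prodAux
variable {W X Y Z : Type*}
  [NormedAddCommGroup W] [NormedSpace ℝ W]
  [NormedAddCommGroup X] [NormedSpace ℝ X]
  [NormedAddCommGroup Y] [NormedSpace ℝ Y]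
  [NormedAddCommGroup Z] [NormedSpace ℝ Z]

lemma fderiv_partial_fst (F : X × Y → Z) (hF : Differentiable ℝ F) (a : X) (b : Y) :
    fderiv ℝ (fun x => F (x, b)) a = (fderiv ℝ F (a, b)).comp (inl ℝ X Y) :=
  ((hF (a, b)).hasFDerivAt.comp a (hasFDerivAt_prodMk_left a b)).fderiv

lemma fderiv_partial_snd (F : X × Y → Z) (hF : Differentiable ℝ F) (a : X) (b : Y) :
    fderiv ℝ (fun y => F (a, y)) b = (fderiv ℝ F (a, b)).comp (inr ℝ X Y) :=
  ((hF (a, b)).hasFDerivAt.comp b (hasFDerivAt_prodMk_right a b)).fderiv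

lemma fderiv_comp₂ (F : X × Y → Z) (hF : Differentiable ℝ F)
    (g : W → X) (h : W → Y) {w : W}
    (hg : DifferentiableAt ℝ g w) (hh : DifferentiableAt ℝ h w) :
    fderiv ℝ (fun w => F (g w, h w)) w =
      (fderiv ℝ (fun x => F (x, h w)) (g w)).comp (fderiv ℝ g w) +
      (fderiv ℝ (fun y => F (g w, y)) (h w)).comp (fderiv ℝ h w) := by
  have hc : HasFDerivAt (fun w => F (g w, h w))
      ((fderiv ℝ F (g w, h w)).comp ((fderiv ℝ g w).prod (fderiv ℝ h w))) w :=
    (hF (g w, h w)).hasFDerivAt.comp w (hg.hasFDerivAt.prodMk hh.hasFDerivAt)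
  rw [hc.fderiv, fderiv_partial_fst F hF (g w) (h w), fderiv_partial_snd F hF (g w) (h w)]
  ext v
  simp only [coe_comp', Function.comp_apply, ContinuousLinearMap.prod_apply, add_apply,
    inl_apply, inr_apply]
  rw [← map_add]
  simp

end prodAux

section rollout
variable {Θ S A : Type*}
  [NormedAddCommGroup Θ] [NormedSpace ℝ Θ]
  [NormedAddCommGroup S] [NormedSpace ℝ S]
  [NormedAddCommGroup A] [NormedSpace ℝ A]
  (π : Θ × S → A) (g : S × A → S) (s₀ : S)

lemma sHat_diff (hπ : Differentiable ℝ π) (hg : Differentiable ℝ g) :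
    ∀ i, Differentiable ℝ (sHat π g s₀ i) := by
  intro i
  induction i with
  | zero => exact differentiable_const _
  | succ i ih => exact hg.comp (ih.prodMk (hπ.comp (differentiable_id.prodMk ih)))

lemma aHat_diff (hπ : Differentiable ℝ π) (hg : Differentiable ℝ g) (i : ℕ) :
    Differentiable ℝ (aHat π g s₀ i) :=
  hπ.comp (differentiable_id.prodMk (sHat_diff π g s₀ hπ hg i))

lemma fderiv_aHat_eq (hπ : Differentiable ℝ π) (hg : Differentiable ℝ g) (i : ℕ) (θ : Θ) :
    fderiv ℝ (aHat π g s₀ i) θ =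
      fderiv ℝ (fun t => π (t, sHat π g s₀ i θ)) θ +
      (fderiv ℝ (fun s => π (θ, s)) (sHat π g s₀ i θ)).comp (fderiv ℝ (sHat π g s₀ i) θ) := by
  have h := fderiv_comp₂ π hπ id (sHat π g s₀ i) differentiableAt_id
    ((sHat_diff π g s₀ hπ hg i) θ)
  rw [show aHat π g s₀ i = fun w => π (w, sHat π g s₀ i w) from rfl]
  simpa [aHat, fderiv_id] using h

lemma fderiv_sHat_succ (hπ : Differentiable ℝ π) (hg : Differentiable ℝ g) (i : ℕ) (θ : Θ) :
    fderiv ℝ (sHat π g s₀ (i + 1)) θ =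
      (fderiv ℝ (fun s => g (s, aHat π g s₀ i θ)) (sHat π g s₀ i θ)).comp
        (fderiv ℝ (sHat π g s₀ i) θ) +
      (fderiv ℝ (fun a => g (sHat π g s₀ i θ, a)) (aHat π g s₀ i θ)).comp
        (fderiv ℝ (aHat π g s₀ i) θ) :=
  fderiv_comp₂ g hg (sHat π g s₀ i) (aHat π g s₀ i)
    ((sHat_diff π g s₀ hπ hg i) θ) ((aHat_diff π g s₀ hπ hg i) θ)

end rollout

set_option maxHeartbeats 1000000 in
/-- **Derivative-bias propagation, action part** (equation (36)). Comparing the model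
rollout (dynamics `f̂`) with the true rollout (dynamics `f`) from the same initial state:
if `ε_f` bounds the sum of the partial-derivative errors of the model along the rollouts,
then for `i ≥ 1`,
`‖D_θ â_i(θ) − D_θ a_i(θ)‖ ≤ L_π ((ε_f + 2 L_f L_π) K̂(i−1) + 2 L_f L_θ) ∑_{j<i} M_f^j
  + 2 L_π K̂(i) + 2 L_θ`, `M_f = L_f (1 + L_π)`. -/
theorem stmt8 {Θ S A : Type*}
    [NormedAddCommGroup Θ] [NormedSpace ℝ Θ]
    [NormedAddCommGroup S] [NormedSpace ℝ S]
    [NormedAddCommGroup A] [NormedSpace ℝ A]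
    (π : Θ × S → A) (fh f : S × A → S) (s₀ : S)
    (Lθ Lπ Lfh Lf εf : ℝ) (hεf : 0 ≤ εf)
    (hπdiff : Differentiable ℝ π)
    (hπθ : ∀ p : Θ × S, ‖fderiv ℝ (fun θ : Θ => π (θ, p.2)) p.1‖ ≤ Lθ)
    (hπs : ∀ p : Θ × S, ‖fderiv ℝ (fun s : S => π (p.1, s)) p.2‖ ≤ Lπ)
    (hfhdiff : Differentiable ℝ fh)
    (hfhs : ∀ p : S × A, ‖fderiv ℝ (fun s : S => fh (s, p.2)) p.1‖ ≤ Lfh)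
    (hfha : ∀ p : S × A, ‖fderiv ℝ (fun a : A => fh (p.1, a)) p.2‖ ≤ Lfh)
    (hfdiff : Differentiable ℝ f)
    (hfs : ∀ p : S × A, ‖fderiv ℝ (fun s : S => f (s, p.2)) p.1‖ ≤ Lf)
    (hfa : ∀ p : S × A, ‖fderiv ℝ (fun a : A => f (p.1, a)) p.2‖ ≤ Lf)
    (hmodelerr : ∀ i : ℕ, 1 ≤ i → ∀ θ : Θ,
      ‖fderiv ℝ (fun s : S => fh (s, aHat π fh s₀ (i - 1) θ)) (sHat π fh s₀ (i - 1) θ) -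
          fderiv ℝ (fun s : S => f (s, aHat π f s₀ (i - 1) θ)) (sHat π f s₀ (i - 1) θ)‖ +
        ‖fderiv ℝ (fun a : A => fh (sHat π fh s₀ (i - 1) θ, a)) (aHat π fh s₀ (i - 1) θ) -
          fderiv ℝ (fun a : A => f (sHat π f s₀ (i - 1) θ, a)) (aHat π f s₀ (i - 1) θ)‖ ≤
        εf) :
    ∀ i : ℕ, 1 ≤ i → ∀ θ : Θ,
      ‖fderiv ℝ (aHat π fh s₀ i) θ - fderiv ℝ (aHat π f s₀ i) θ‖ ≤
        Lπ * (((εf + 2 * Lf * Lπ) * Khat Lπ Lfh Lθ (i - 1) + 2 * Lf * Lθ) *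
            ∑ j ∈ Finset.range i, (Lf * (1 + Lπ)) ^ j) +
          2 * Lπ * Khat Lπ Lfh Lθ i + 2 * Lθ := by
  have hLθ0 : 0 ≤ Lθ := (norm_nonneg _).trans (hπθ (0, 0))
  have hLπ0 : 0 ≤ Lπ := (norm_nonneg _).trans (hπs (0, 0))
  have hLfh0 : 0 ≤ Lfh := (norm_nonneg _).trans (hfhs (0, 0))
  have hLf0 : 0 ≤ Lf := (norm_nonneg _).trans (hfs (0, 0))
  have h1π : (0:ℝ) ≤ 1 + Lπ := by linarith
  have hsig : ∀ i : ℕ, (0:ℝ) ≤ ∑ j ∈ Finset.range i, (Lfh * (1 + Lπ)) ^ j :=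
    fun i => Finset.sum_nonneg fun j _ => pow_nonneg (mul_nonneg hLfh0 h1π) j
  have hsf : ∀ i : ℕ, (0:ℝ) ≤ ∑ j ∈ Finset.range i, (Lf * (1 + Lπ)) ^ j :=
    fun i => Finset.sum_nonneg fun j _ => pow_nonneg (mul_nonneg hLf0 h1π) j
  have hK0 : ∀ i, 0 ≤ Khat Lπ Lfh Lθ i := by
    intro i
    exact add_nonneg (mul_nonneg (mul_nonneg (mul_nonneg h1π hLfh0) hLθ0) (hsig i)) hLθ0
  have hKmono : ∀ i : ℕ, Khat Lπ Lfh Lθ (i - 1) ≤ Khat Lπ Lfh Lθ i := by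
    intro i
    unfold Khat
    have hsub : ∑ j ∈ Finset.range (i - 1), (Lfh * (1 + Lπ)) ^ j
        ≤ ∑ j ∈ Finset.range i, (Lfh * (1 + Lπ)) ^ j :=
      Finset.sum_le_sum_of_subset_of_nonneg
        (Finset.range_subset_range.mpr (Nat.sub_le i 1))
        (fun j _ _ => pow_nonneg (mul_nonneg hLfh0 h1π) j)
    have := mul_le_mul_of_nonneg_left hsub
      (mul_nonneg (mul_nonneg h1π hLfh0) hLθ0)
    linarith [this]
  -- bound on ‖D aHat‖ in terms of ‖D sHat‖ for the model rollout
  have hDa : ∀ i θ, ‖fderiv ℝ (aHat π fh s₀ i) θ‖ ≤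
      Lθ + Lπ * ‖fderiv ℝ (sHat π fh s₀ i) θ‖ := by
    intro i θ
    rw [fderiv_aHat_eq π fh s₀ hπdiff hfhdiff i θ]
    have h1 : ‖fderiv ℝ (fun t : Θ => π (t, sHat π fh s₀ i θ)) θ‖ ≤ Lθ :=
      hπθ (θ, sHat π fh s₀ i θ)
    have h2 : ‖fderiv ℝ (fun s : S => π (θ, s)) (sHat π fh s₀ i θ)‖ ≤ Lπ :=
      hπs (θ, sHat π fh s₀ i θ)
    have h3 := (fderiv ℝ (fun s : S => π (θ, s)) (sHat π fh s₀ i θ)).opNorm_comp_le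
      (fderiv ℝ (sHat π fh s₀ i) θ)
    have h4 := mul_le_mul_of_nonneg_right h2 (norm_nonneg (fderiv ℝ (sHat π fh s₀ i) θ))
    refine (norm_add_le _ _).trans ?_
    linarith
  -- geometric bound on ‖D sHat‖ for the model rollout
  have hDs : ∀ i θ, ‖fderiv ℝ (sHat π fh s₀ i) θ‖ ≤
      Lfh * Lθ * ∑ j ∈ Finset.range i, (Lfh * (1 + Lπ)) ^ j := by
    intro i
    induction i with
    | zero => intro θ; simp [sHat]
    | succ i ih =>
      intro θ
      rw [fderiv_sHat_succ π fh s₀ hπdiff hfhdiff i θ, geom_sum_succ]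
      have e1 : ‖(fderiv ℝ (fun s => fh (s, aHat π fh s₀ i θ)) (sHat π fh s₀ i θ)).comp
          (fderiv ℝ (sHat π fh s₀ i) θ)‖ ≤ Lfh * ‖fderiv ℝ (sHat π fh s₀ i) θ‖ :=
        (opNorm_comp_le _ _).trans (mul_le_mul_of_nonneg_right
          (hfhs (sHat π fh s₀ i θ, aHat π fh s₀ i θ)) (norm_nonneg _))
      have e2 : ‖(fderiv ℝ (fun a => fh (sHat π fh s₀ i θ, a)) (aHat π fh s₀ i θ)).comp
          (fderiv ℝ (aHat π fh s₀ i) θ)‖ ≤ Lfh * ‖fderiv ℝ (aHat π fh s₀ i) θ‖ :=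
        (opNorm_comp_le _ _).trans (mul_le_mul_of_nonneg_right
          (hfha (sHat π fh s₀ i θ, aHat π fh s₀ i θ)) (norm_nonneg _))
      have e3 := hDa i θ
      have e4 := ih θ
      have p5 := mul_le_mul_of_nonneg_left e4 hLfh0
      have p6 := mul_le_mul_of_nonneg_left
        (mul_le_mul_of_nonneg_left e4 hLπ0) hLfh0
      have p7 := mul_le_mul_of_nonneg_left e3 hLfh0
      refine (norm_add_le _ _).trans ?_
      nlinarith [e1, e2, p5, p6, p7]
  have hDsK : ∀ i θ, ‖fderiv ℝ (sHat π fh s₀ i) θ‖ ≤ Khat Lπ Lfh Lθ i := by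
    intro i θ
    refine (hDs i θ).trans ?_
    unfold Khat
    have h0 : 0 ≤ Lπ * (Lfh * Lθ * ∑ j ∈ Finset.range i, (Lfh * (1 + Lπ)) ^ j) :=
      mul_nonneg hLπ0 (mul_nonneg (mul_nonneg hLfh0 hLθ0) (hsig i))
    nlinarith [hsig i, hLθ0]
  have hDaK : ∀ i θ, ‖fderiv ℝ (aHat π fh s₀ i) θ‖ ≤ Khat Lπ Lfh Lθ i := by
    intro i θ
    refine (hDa i θ).trans ?_
    unfold Khat
    have := mul_le_mul_of_nonneg_left (hDs i θ) hLπ0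
    nlinarith [hsig i, mul_nonneg (mul_nonneg hLfh0 hLθ0) (hsig i)]
  -- one-step comparison for actions
  have keyA : ∀ i θ, ‖fderiv ℝ (aHat π fh s₀ i) θ - fderiv ℝ (aHat π f s₀ i) θ‖ ≤
      2 * Lθ + 2 * Lπ * Khat Lπ Lfh Lθ i +
        Lπ * ‖fderiv ℝ (sHat π fh s₀ i) θ - fderiv ℝ (sHat π f s₀ i) θ‖ := by
    intro i θ
    have a1 : ‖fderiv ℝ (fun t : Θ => π (t, sHat π fh s₀ i θ)) θ‖ ≤ Lθ :=
      hπθ (θ, sHat π fh s₀ i θ)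
    have a2 : ‖fderiv ℝ (fun t : Θ => π (t, sHat π f s₀ i θ)) θ‖ ≤ Lθ :=
      hπθ (θ, sHat π f s₀ i θ)
    have a3 : ‖fderiv ℝ (fun s : S => π (θ, s)) (sHat π fh s₀ i θ)‖ ≤ Lπ :=
      hπs (θ, sHat π fh s₀ i θ)
    have a4 : ‖fderiv ℝ (fun s : S => π (θ, s)) (sHat π f s₀ i θ)‖ ≤ Lπ :=
      hπs (θ, sHat π f s₀ i θ)
    have a5 := hDsK i θ
    rw [fderiv_aHat_eq π fh s₀ hπdiff hfhdiff i θ, fderiv_aHat_eq π f s₀ hπdiff hfdiff i θ]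
    set Ph := fderiv ℝ (fun t : Θ => π (t, sHat π fh s₀ i θ)) θ with hPh
    set Pf := fderiv ℝ (fun t : Θ => π (t, sHat π f s₀ i θ)) θ with hPf
    set Qh := fderiv ℝ (fun s : S => π (θ, s)) (sHat π fh s₀ i θ) with hQh
    set Qf := fderiv ℝ (fun s : S => π (θ, s)) (sHat π f s₀ i θ) with hQf
    set Dh := fderiv ℝ (sHat π fh s₀ i) θ with hDh
    set Df := fderiv ℝ (sHat π f s₀ i) θ with hDf
    have hre : Ph + Qh.comp Dh - (Pf + Qf.comp Df)
        = (Ph - Pf) + ((Qh - Qf).comp Dh + Qf.comp (Dh - Df)) := by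
      rw [sub_comp, comp_sub]; abel
    rw [hre]
    have n1 : ‖Ph - Pf‖ ≤ 2 * Lθ := (norm_sub_le _ _).trans (by linarith)
    have n2 : ‖(Qh - Qf).comp Dh‖ ≤ (Lπ + Lπ) * Khat Lπ Lfh Lθ i :=
      (opNorm_comp_le _ _).trans
        (mul_le_mul ((norm_sub_le _ _).trans (by linarith)) a5 (norm_nonneg _)
          (by linarith))
    have n3 : ‖Qf.comp (Dh - Df)‖ ≤ Lπ * ‖Dh - Df‖ :=
      (opNorm_comp_le _ _).trans (mul_le_mul_of_nonneg_right a4 (norm_nonneg _))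
    refine (norm_add_le _ _).trans ?_
    have n4 := norm_add_le ((Qh - Qf).comp Dh) (Qf.comp (Dh - Df))
    linarith
  -- main induction: comparison of state derivatives
  have key : ∀ i θ, ‖fderiv ℝ (sHat π fh s₀ i) θ - fderiv ℝ (sHat π f s₀ i) θ‖ ≤
      ((εf + 2 * Lf * Lπ) * Khat Lπ Lfh Lθ (i - 1) + 2 * Lf * Lθ) *
        ∑ j ∈ Finset.range i, (Lf * (1 + Lπ)) ^ j := by
    intro i
    induction i with
    | zero => intro θ; simp [sHat]
    | succ i ih =>
      intro θ
      have hε := hmodelerr (i + 1) (Nat.le_add_left 1 i) θ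
      simp only [Nat.add_sub_cancel] at hε ⊢
      have bAf : ‖fderiv ℝ (fun s : S => f (s, aHat π f s₀ i θ)) (sHat π f s₀ i θ)‖ ≤ Lf :=
        hfs (sHat π f s₀ i θ, aHat π f s₀ i θ)
      have bBf : ‖fderiv ℝ (fun a : A => f (sHat π f s₀ i θ, a)) (aHat π f s₀ i θ)‖ ≤ Lf :=
        hfa (sHat π f s₀ i θ, aHat π f s₀ i θ)
      have bDsh := hDsK i θ
      have bDah := hDaK i θ
      have bΔa := keyA i θ
      have bΔs := ih θ
      rw [fderiv_sHat_succ π fh s₀ hπdiff hfhdiff i θ,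
        fderiv_sHat_succ π f s₀ hπdiff hfdiff i θ, geom_sum_succ]
      set Ah := fderiv ℝ (fun s : S => fh (s, aHat π fh s₀ i θ)) (sHat π fh s₀ i θ) with hAh
      set Af := fderiv ℝ (fun s : S => f (s, aHat π f s₀ i θ)) (sHat π f s₀ i θ) with hAf
      set Bh := fderiv ℝ (fun a : A => fh (sHat π fh s₀ i θ, a)) (aHat π fh s₀ i θ) with hBh
      set Bf := fderiv ℝ (fun a : A => f (sHat π f s₀ i θ, a)) (aHat π f s₀ i θ) with hBf
      set Dsh := fderiv ℝ (sHat π fh s₀ i) θ with hDsh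
      set Dsf := fderiv ℝ (sHat π f s₀ i) θ with hDsf
      set Dah := fderiv ℝ (aHat π fh s₀ i) θ with hDah
      set Daf := fderiv ℝ (aHat π f s₀ i) θ with hDaf
      have hre : Ah.comp Dsh + Bh.comp Dah - (Af.comp Dsf + Bf.comp Daf)
          = (Ah - Af).comp Dsh + Af.comp (Dsh - Dsf) +
            ((Bh - Bf).comp Dah + Bf.comp (Dah - Daf)) := by
        rw [sub_comp, sub_comp, comp_sub, comp_sub]; abel
      rw [hre]
      have t1 : ‖(Ah - Af).comp Dsh‖ ≤ ‖Ah - Af‖ * Khat Lπ Lfh Lθ i :=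
        (opNorm_comp_le _ _).trans (mul_le_mul_of_nonneg_left bDsh (norm_nonneg _))
      have t2 : ‖Af.comp (Dsh - Dsf)‖ ≤ Lf * ‖Dsh - Dsf‖ :=
        (opNorm_comp_le _ _).trans (mul_le_mul_of_nonneg_right bAf (norm_nonneg _))
      have t3 : ‖(Bh - Bf).comp Dah‖ ≤ ‖Bh - Bf‖ * Khat Lπ Lfh Lθ i :=
        (opNorm_comp_le _ _).trans (mul_le_mul_of_nonneg_left bDah (norm_nonneg _))
      have t4 : ‖Bf.comp (Dah - Daf)‖ ≤ Lf * ‖Dah - Daf‖ :=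
        (opNorm_comp_le _ _).trans (mul_le_mul_of_nonneg_right bBf (norm_nonneg _))
      have tsplit := (norm_add_le ((Ah - Af).comp Dsh + Af.comp (Dsh - Dsf))
        ((Bh - Bf).comp Dah + Bf.comp (Dah - Daf))).trans
        (add_le_add (norm_add_le _ _) (norm_add_le _ _))
      have p1 := mul_le_mul_of_nonneg_right hε (hK0 i)
      have p2 := mul_le_mul_of_nonneg_left bΔa hLf0
      have p3 := mul_le_mul_of_nonneg_left bΔs (mul_nonneg hLf0 h1π)
      have hC : (εf + 2 * Lf * Lπ) * Khat Lπ Lfh Lθ (i - 1) + 2 * Lf * Lθ ≤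
          (εf + 2 * Lf * Lπ) * Khat Lπ Lfh Lθ i + 2 * Lf * Lθ := by
        have := mul_le_mul_of_nonneg_left (hKmono i)
          (by nlinarith [mul_nonneg hLf0 hLπ0] : (0:ℝ) ≤ εf + 2 * Lf * Lπ)
        linarith
      have p4 := mul_le_mul_of_nonneg_left
        (mul_le_mul_of_nonneg_right hC (hsf i)) (mul_nonneg hLf0 h1π)
      linarith [t1, t2, t3, t4, tsplit, p1, p2, p3, p4]
  intro i hi θ
  have h1 := keyA i θ
  have h2 := mul_le_mul_of_nonneg_left (key i θ) hLπ0
  linarith
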